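/- arXiv:1708.02092 — 3 statements merged into one kernel-verified Lean document; each statement's English description precedes it below -/
import Mathlib

section
/- Let G be a simple graph with minimum degree at least 2, cellularly embedded in an orientable surface. Then every face of length 5 is simple, i.e., no vertex appears more than once in the boundary walk of a 5-sided face. -/
open SimpleGraph

/-- A rotation system on a simple graph `G`: at each vertex `v`, a cyclic permutation
`rot v` of the neighbors of `v`.  By the Heffter–Edmonds principle this is exactly the
combinatorial data of a cellular embedding of `G` in an orientable surface. -/
structure RotSys {V : Type} (G : SimpleGraph V) where
  rot : V → V → V
  adj_rot : ∀ {v w : V}, G.Adj v w → G.Adj v (rot v w)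
  inj : ∀ {v w w' : V}, G.Adj v w → G.Adj v w' → rot v w = rot v w' → w = w'
  cyc : ∀ {v w w' : V}, G.Adj v w → G.Adj v w' → ∃ k : ℕ, (rot v)^[k] w = w'

/-- The face-tracing map on darts: the faces of the embedding described by a rotation
system are the orbits of this map (Heffter–Edmonds). -/
def RotSys.next {V : Type} {G : SimpleGraph V} (R : RotSys G) (d : G.Dart) : G.Dart :=
  ⟨(d.toProd.2, R.rot d.toProd.2 d.toProd.1), R.adj_rot d.adj.symm⟩

/-- The number of faces of the embedding described by a rotation system: the number of
orbits of the face-tracing map. -/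
noncomputable def RotSys.numFaces {V : Type} {G : SimpleGraph V} (R : RotSys G) : ℕ :=
  Nat.card (Quot (fun d d' => R.next d = d'))

/-- The sequence of vertices along the face walk starting at dart `d`. -/
def uSeq {V : Type} {G : SimpleGraph V} (R : RotSys G) (d : G.Dart) (i : ℕ) : V :=
  ((R.next)^[i] d).toProd.1

lemma uSeq_snd {V : Type} {G : SimpleGraph V} (R : RotSys G) (d : G.Dart) (i : ℕ) :
    ((R.next)^[i] d).toProd.2 = uSeq R d (i + 1) := by
  rw [uSeq, Function.iterate_succ_apply']
  rfl

lemma uSeq_adj {V : Type} {G : SimpleGraph V} (R : RotSys G) (d : G.Dart) (i : ℕ) :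
    G.Adj (uSeq R d i) (uSeq R d (i + 1)) := by
  rw [← uSeq_snd]
  exact ((R.next)^[i] d).adj

lemma uSeq_rot {V : Type} {G : SimpleGraph V} (R : RotSys G) (d : G.Dart) (i : ℕ) :
    uSeq R d (i + 2) = R.rot (uSeq R d (i + 1)) (uSeq R d i) := by
  have h : uSeq R d (i + 2) = ((R.next)^[i + 1] d).toProd.2 := (uSeq_snd R d (i + 1)).symm
  rw [h, Function.iterate_succ_apply']
  show R.rot ((R.next^[i] d).toProd.2) ((R.next^[i] d).toProd.1) = _
  rw [uSeq_snd]
  rfl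

/-- A rotation at a vertex of degree ≥ 2 has no fixed point among the neighbors. -/
lemma rot_no_fix {V : Type} [Fintype V] [DecidableEq V] {G : SimpleGraph V}
    [DecidableRel G.Adj] (hdeg : ∀ v, 2 ≤ G.degree v) (R : RotSys G)
    {a b : V} (hab : G.Adj a b) : R.rot a b ≠ b := by
  intro hfx
  have hall : ∀ w, G.Adj a w → w = b := by
    intro w hw
    obtain ⟨k, hk⟩ := R.cyc hab hw
    have hit : ∀ m, (R.rot a)^[m] b = b := by
      intro m
      induction m with
      | zero => rfl
      | succ n ih => rw [Function.iterate_succ_apply', ih, hfx]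
    rw [hit k] at hk
    exact hk.symm
  have h1 : G.degree a ≤ 1 := by
    rw [SimpleGraph.degree]
    apply Finset.card_le_one.mpr
    intro x hx y hy
    rw [SimpleGraph.mem_neighborFinset] at hx hy
    rw [hall x hx, hall y hy]
  have := hdeg a
  omega

/-- Let `G` be a simple graph with minimum degree at least 2, cellularly embedded in an
orientable surface (given by a rotation system).  Then every face of length 5 is
simple: the five vertices on its boundary walk are pairwise distinct. -/
theorem stmt5 {V : Type} [Fintype V] [DecidableEq V] (G : SimpleGraph V)
    [DecidableRel G.Adj] (hdeg : ∀ v, 2 ≤ G.degree v)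
    (R : RotSys G) (d : G.Dart)
    (hlen : (R.next)^[5] d = d) (hmin : ∀ k, 0 < k → k < 5 → (R.next)^[k] d ≠ d) :
    ∀ i j, i < 5 → j < 5 →
      ((R.next)^[i] d).toProd.1 = ((R.next)^[j] d).toProd.1 → i = j := by
  have hp : ∀ i, uSeq R d (i + 5) = uSeq R d i := by
    intro i
    unfold uSeq
    rw [Function.iterate_add_apply, hlen]
  have h1 : ∀ i, uSeq R d i ≠ uSeq R d (i + 1) := fun i => (uSeq_adj R d i).ne
  have h2 : ∀ i, uSeq R d i ≠ uSeq R d (i + 2) := by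
    intro i he
    exact rot_no_fix hdeg R (uSeq_adj R d i).symm (by rw [← uSeq_rot R d i, ← he])
  have h3 : ∀ i, uSeq R d i ≠ uSeq R d (i + 3) := by
    intro i he
    exact h2 (i + 3) (by rw [show i + 3 + 2 = i + 5 from by omega, hp, ← he])
  have h4 : ∀ i, uSeq R d i ≠ uSeq R d (i + 4) := by
    intro i he
    exact h1 (i + 4) (by rw [show i + 4 + 1 = i + 5 from by omega, hp, ← he])
  intro i j hi hj hij
  have hij' : uSeq R d i = uSeq R d j := hij
  clear hij
  interval_cases i <;> interval_cases j <;>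
    first
    | rfl
    | exact absurd hij' (h1 _)
    | exact absurd hij' (h2 _)
    | exact absurd hij' (h3 _)
    | exact absurd hij' (h4 _)
    | exact absurd hij'.symm (h1 _)
    | exact absurd hij'.symm (h2 _)
    | exact absurd hij'.symm (h3 _)
    | exact absurd hij'.symm (h4 _)
end

section
/- Let G be a simple graph with minimum degree at least 2, cellularly embedded in an orientable surface. Then in any face of length 6, at most one vertex is repeated in the boundary walk, and the two occurrences of any repeated vertex are antipodal, i.e., the boundary walk has the form [a, b, x, c, d, x'] where only x and x' can be equal. -/
open SimpleGraph

section Aux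
variable {V : Type} {G : SimpleGraph V} (R : RotSys G)

lemma RotSys.next_injective : Function.Injective R.next := by
  intro a b h
  have h2 : a.toProd.2 = b.toProd.2 := congrArg (fun e => e.toProd.1) h
  have hr : R.rot a.toProd.2 a.toProd.1 = R.rot b.toProd.2 b.toProd.1 :=
    congrArg (fun e => e.toProd.2) h
  have h1 : a.toProd.1 = b.toProd.1 :=
    R.inj a.adj.symm (h2 ▸ b.adj.symm) (by rw [hr, h2])
  exact Dart.ext _ _ (Prod.ext h1 h2)

lemma RotSys.not_rot_fixed [Fintype V] [DecidableRel G.Adj] (hdeg : ∀ v, 2 ≤ G.degree v)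
    {v w : V} (hadj : G.Adj v w) (hfix : R.rot v w = w) : False := by
  have hall : ∀ w', G.Adj v w' → w' = w := by
    intro w' hw'
    obtain ⟨k, hk⟩ := R.cyc hadj hw'
    rw [Function.iterate_fixed hfix k] at hk
    exact hk.symm
  classical
  have hsub : G.neighborFinset v ⊆ {w} := by
    intro x hx
    rw [mem_neighborFinset] at hx
    simp [hall x hx]
  have hc := Finset.card_le_card hsub
  rw [Finset.card_singleton] at hc
  have := hdeg v
  rw [← card_neighborFinset_eq_degree] at this
  omega

lemma RotSys.not_back2 [Fintype V] [DecidableRel G.Adj] (hdeg : ∀ v, 2 ≤ G.degree v)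
    (e : G.Dart) (h : ((R.next)^[2] e).toProd.1 = e.toProd.1) : False :=
  R.not_rot_fixed hdeg e.adj.symm h

end Aux

/-- Let `G` be a simple graph with minimum degree at least 2, cellularly embedded in an
orientable surface (given by a rotation system).  Then in any face of length 6, the two
occurrences of a repeated vertex are antipodal (at distance 3 along the boundary walk),
and at most one vertex of the face is repeated. -/

theorem stmt6 {V : Type} [Fintype V] [DecidableEq V] (G : SimpleGraph V)
    [DecidableRel G.Adj] (hdeg : ∀ v, 2 ≤ G.degree v)
    (R : RotSys G) (d : G.Dart)
    (hlen : (R.next)^[6] d = d) (hmin : ∀ k, 0 < k → k < 6 → (R.next)^[k] d ≠ d) :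
    (∀ i j, i < j → j < 6 →
        ((R.next)^[i] d).toProd.1 = ((R.next)^[j] d).toProd.1 → j = i + 3) ∧
    (∀ i i', i < 3 → i' < 3 →
        ((R.next)^[i] d).toProd.1 = ((R.next)^[i + 3] d).toProd.1 →
        ((R.next)^[i'] d).toProd.1 = ((R.next)^[i' + 3] d).toProd.1 → i = i') := by
  have h6 : ∀ k, (R.next)^[k + 6] d = (R.next)^[k] d := by
    intro k
    rw [Function.iterate_add_apply, hlen]
  have hveq : ∀ k, ((R.next)^[k + 6] d).toProd.1 = ((R.next)^[k] d).toProd.1 :=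
    fun k => by rw [h6 k]
  have hsnd : ∀ k, ((R.next)^[k] d).toProd.2 = ((R.next)^[k + 1] d).toProd.1 := by
    intro k
    rw [Function.iterate_succ_apply']
    exact rfl
  have hne1 : ∀ k, ((R.next)^[k] d).toProd.1 ≠ ((R.next)^[k + 1] d).toProd.1 := by
    intro k
    rw [← hsnd k]
    exact ((R.next)^[k] d).adj.ne
  have hne2 : ∀ k, ((R.next)^[k + 2] d).toProd.1 ≠ ((R.next)^[k] d).toProd.1 := by
    intro k h
    apply R.not_back2 hdeg ((R.next)^[k] d)
    rw [← Function.iterate_add_apply, Nat.add_comm 2 k]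
    exact h
  have hdd : ∀ k, (R.next)^[k] d = (R.next)^[k + 3] d → False := by
    intro k hk
    apply hmin 3 (by norm_num) (by norm_num)
    apply R.next_injective.iterate k
    have : (R.next)^[k] ((R.next)^[3] d) = (R.next)^[k] d := by
      rw [← Function.iterate_add_apply]
      exact hk.symm
    exact this
  have hd : ∀ k, ((R.next)^[k] d).toProd.1 = ((R.next)^[k + 3] d).toProd.1 →
      ((R.next)^[k + 1] d).toProd.1 = ((R.next)^[k + 4] d).toProd.1 →
      (R.next)^[k] d = (R.next)^[k + 3] d := by
    intro k h1 h2
    apply Dart.ext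
    apply Prod.ext h1
    rw [hsnd k, hsnd (k + 3)]
    exact h2
  constructor
  · intro i j hij hj6 hvv
    interval_cases j <;> interval_cases i
    · exact absurd hvv (hne1 0)
    · exact absurd hvv.symm (hne2 0)
    · exact absurd hvv (hne1 1)
    · rfl
    · exact absurd hvv.symm (hne2 1)
    · exact absurd hvv (hne1 2)
    · exact absurd ((hveq 0).trans hvv) (hne2 4)
    · rfl
    · exact absurd hvv.symm (hne2 2)
    · exact absurd hvv (hne1 3)
    · exact absurd (hvv.symm.trans (hveq 0).symm) (hne1 5)
    · exact absurd ((hveq 1).trans hvv) (hne2 5)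
    · rfl
    · exact absurd hvv.symm (hne2 3)
    · exact absurd hvv (hne1 4)
  · intro i i' hi hi' h h'
    interval_cases i <;> interval_cases i'
    · rfl
    · exact absurd (hd 0 h h') (fun hk => hdd 0 hk)
    · exact absurd (hd 2 h' ((hveq 0).trans h).symm) (fun hk => hdd 2 hk)
    · exact absurd (hd 0 h' h) (fun hk => hdd 0 hk)
    · rfl
    · exact absurd (hd 1 h h') (fun hk => hdd 1 hk)
    · exact absurd (hd 2 h ((hveq 0).trans h').symm) (fun hk => hdd 2 hk)
    · exact absurd (hd 1 h' h) (fun hk => hdd 1 hk)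
    · rfl
end

section
/- K_8 has no nearly triangular embedding in the orientable surface of genus 2: there is no cellular embedding of K_8 in S_2 with at most one nontriangular face. Consequently, assuming Huneke's theorem that no simple graph with fewer than 10 vertices triangulates S_2, K_8 has no nearly triangular minimum genus embedding. -/
set_option linter.unusedSectionVars false
set_option linter.unusedVariables false


open SimpleGraph

/-- An embedding (rotation system) is nearly triangular if at most one face is
nontriangular: every face either is a triangle or is the face of some fixed dart. -/
def RotSys.nearlyTriangular {V : Type} {G : SimpleGraph V} (R : RotSys G) : Prop :=
  ∃ d₀ : G.Dart, ∀ d : G.Dart, (R.next)^[3] d = d ∨ ∃ k : ℕ, (R.next)^[k] d₀ = d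


set_option linter.unusedSectionVars false

open Function

section OrbitCount

variable {α : Type} [Fintype α] [DecidableEq α] (f : α → α)

lemma exists_period (hf : Function.Injective f) (x : α) : ∃ m, 0 < m ∧ f^[m] x = x := by
  obtain ⟨i, j, hij, h⟩ := Finite.exists_ne_map_eq_of_infinite (fun k : ℕ => f^[k] x)
  rcases Nat.lt_or_ge i j with hlt | hge
  · refine ⟨j - i, by omega, ?_⟩
    have := (hf.iterate i) (a₁ := f^[j-i] x) (a₂ := x) ?_
    · exact this
    · rw [← Function.iterate_add_apply]
      rw [show i + (j - i) = j by omega]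
      exact h.symm
  · have hlt : j < i := by omega
    refine ⟨i - j, by omega, ?_⟩
    have := (hf.iterate j) (a₁ := f^[i-j] x) (a₂ := x) ?_
    · exact this
    · rw [← Function.iterate_add_apply]
      rw [show j + (i - j) = i by omega]
      exact h

/-- iterated fixed point -/
lemma iterate_mul_fix {m : ℕ} {x : α} (h : f^[m] x = x) (t : ℕ) : f^[m * t] x = x := by
  induction t with
  | zero => simp
  | succ n ih => rw [show m * (n+1) = m * n + m by ring, Function.iterate_add_apply, h, ih]

/-- Orbit equivalence for an injective self-map of a finite type. -/
def orb (hf : Function.Injective f) : Setoid α := by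
  refine ⟨fun x y => ∃ k, f^[k] x = y, ?_, ?_, ?_⟩
  · exact fun x => ⟨0, rfl⟩
  · rintro x y ⟨k, rfl⟩
    obtain ⟨m, hm, hper⟩ := exists_period f hf x
    refine ⟨m * k + m - k, ?_⟩
    rw [← Function.iterate_add_apply]
    have hk : k ≤ m * k := Nat.le_mul_of_pos_left k hm
    rw [show m * k + m - k + k = m * (k + 1) by have : m*(k+1) = m*k+m := by ring
                                                omega]
    exact iterate_mul_fix f hper (k+1)
  · rintro x y z ⟨k, rfl⟩ ⟨l, rfl⟩
    exact ⟨l + k, Function.iterate_add_apply f l k x⟩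

noncomputable def quotEquiv (hf : Function.Injective f) :
    Quot (fun x y => f x = y) ≃ Quotient (orb f hf) := by
  refine ⟨Quot.lift (fun x => Quotient.mk (orb f hf) x) ?_,
          Quotient.lift (fun x => Quot.mk _ x) ?_, ?_, ?_⟩
  · rintro x y rfl
    exact Quotient.sound ⟨1, rfl⟩
  · rintro x y ⟨k, rfl⟩
    clear hf
    induction k with
    | zero => rfl
    | succ n ih =>
        rw [Function.iterate_succ_apply']
        exact ih.trans (Quot.sound rfl)
  · intro q; induction q using Quot.ind; rfl
  · intro q; induction q using Quotient.ind; rfl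

end OrbitCount

section Count

variable {α : Type} [Fintype α] [DecidableEq α] (f : α → α) (hf : Function.Injective f)

include hf

open scoped Classical in
lemma class_finset_eq (x : α) (h3 : f^[3] x = x) (h1 : f x ≠ x) :
    (Finset.univ.filter fun y => Quotient.mk (orb f hf) y = Quotient.mk (orb f hf) x)
      = {x, f x, f^[2] x} := by
  ext y
  simp only [Finset.mem_filter, Finset.mem_univ, true_and, Finset.mem_insert,
    Finset.mem_singleton]
  constructor
  · intro h
    obtain ⟨k, rfl⟩ := (orb f hf).symm (Quotient.exact h)
    have hper : Function.IsPeriodicPt f 3 x := h3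
    have e := (hper.iterate_mod_apply k).symm
    have : k % 3 = 0 ∨ k % 3 = 1 ∨ k % 3 = 2 := by omega
    rcases this with h0 | h0 | h0 <;> rw [e, h0] <;> simp
  · have sym : ∀ j : ℕ, Quotient.mk (orb f hf) (f^[j] x) = Quotient.mk (orb f hf) x :=
      fun j => Quotient.sound ((orb f hf).symm ⟨j, rfl⟩)
    rintro (rfl | rfl | rfl)
    · exact sym 0
    · exact sym 1
    · exact sym 2

lemma class_card_three (x : α) (h3 : f^[3] x = x) (h1 : f x ≠ x) :
    ({x, f x, f^[2] x} : Finset α).card = 3 := by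
  have e2 : f^[2] x = f (f x) := by
    rw [show (2:ℕ) = 1+1 from rfl, Function.iterate_add_apply]; simp
  have e3 : f^[3] x = f (f (f x)) := by
    rw [show (3:ℕ) = 1+1+1 from rfl, Function.iterate_add_apply, Function.iterate_add_apply]
    simp
  rw [e2]
  rw [e3] at h3
  have h2 : f (f x) ≠ x := by
    intro h
    apply h1
    have : f (f (f x)) = f x := by rw [h]
    rw [h3] at this
    exact this.symm
  have h21 : f (f x) ≠ f x := fun h => h1 (hf h)
  rw [Finset.card_insert_of_notMem (by simp [Ne.symm h1, Ne.symm h2]),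
    Finset.card_insert_of_notMem (by simp [Ne.symm h21])]
  simp

open scoped Classical in
lemma count_master (d₀ : α) (h : ∀ x, (f^[3] x = x ∧ f x ≠ x) ∨ ∃ k, f^[k] d₀ = x) :
    Fintype.card α + 3 = 3 * Nat.card (Quot (fun x y => f x = y))
      + Nat.card {x | ∃ k, f^[k] d₀ = x} := by
  have hN : Nat.card (Quot (fun x y => f x = y)) = Fintype.card (Quotient (orb f hf)) := by
    rw [Nat.card_congr (quotEquiv f hf), Nat.card_eq_fintype_card]
  set mk : α → Quotient (orb f hf) := Quotient.mk (orb f hf) with hmk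
  have horb : ∀ x, (∃ k, f^[k] d₀ = x) ↔ mk x = mk d₀ := by
    intro x
    constructor
    · rintro ⟨k, rfl⟩
      exact Quotient.sound ((orb f hf).symm ⟨k, rfl⟩)
    · intro hq
      exact (orb f hf).symm (Quotient.exact hq)
  have hcard : Fintype.card α
      = ∑ q : Quotient (orb f hf), (Finset.univ.filter fun x => mk x = q).card := by
    rw [← Finset.card_univ]
    exact Finset.card_eq_sum_card_fiberwise (fun x _ => Finset.mem_univ _)
  have hsplit := Finset.sum_erase_add Finset.univ
    (fun q => (Finset.univ.filter fun x => mk x = q).card) (Finset.mem_univ (mk d₀))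
  have hfib3 : ∀ q ∈ Finset.univ.erase (mk d₀),
      (Finset.univ.filter fun x => mk x = q).card = 3 := by
    intro q hq
    obtain ⟨x, rfl⟩ := Quotient.exists_rep q
    have hne := Finset.ne_of_mem_erase hq
    have hx : f^[3] x = x ∧ f x ≠ x := by
      rcases h x with h' | h'
      · exact h'
      · exact absurd ((horb x).mp h') hne
    rw [class_finset_eq f hf x hx.1 hx.2]
    exact class_card_three f hf x hx.1 hx.2
  have hsum3 : ∑ q ∈ Finset.univ.erase (mk d₀),
      (Finset.univ.filter fun x => mk x = q).card
      = 3 * (Fintype.card (Quotient (orb f hf)) - 1) := by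
    rw [Finset.sum_congr rfl hfib3, Finset.sum_const,
      Finset.card_erase_of_mem (Finset.mem_univ _), Finset.card_univ, smul_eq_mul, mul_comm]
  have hC : Nat.card {x | ∃ k, f^[k] d₀ = x}
      = (Finset.univ.filter fun x => mk x = mk d₀).card := by
    have hset : {x | ∃ k, f^[k] d₀ = x} = {x | mk x = mk d₀} := Set.ext fun x => horb x
    rw [hset, Nat.card_eq_fintype_card, Fintype.card_subtype]
    congr 1
  have hQpos : 1 ≤ Fintype.card (Quotient (orb f hf)) :=
    Fintype.card_pos_iff.mpr ⟨mk d₀⟩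
  have hsplit2 : ∑ q ∈ Finset.univ.erase (mk d₀),
      (Finset.filter (fun x => mk x = q) Finset.univ).card
      + (Finset.filter (fun x => mk x = mk d₀) Finset.univ).card
      = ∑ q : Quotient (orb f hf), (Finset.filter (fun x => mk x = q) Finset.univ).card := hsplit
  rw [hN, hC]
  omega

lemma orbit_card_eq_minimalPeriod (d₀ : α) :
    Nat.card {x | ∃ k, f^[k] d₀ = x} = Function.minimalPeriod f d₀ := by
  have hmem : d₀ ∈ Function.periodicPts f := by
    obtain ⟨m, hm, hper⟩ := exists_period f hf d₀
    exact ⟨m, hm, hper⟩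
  have hm : 0 < Function.minimalPeriod f d₀ :=
    Function.minimalPeriod_pos_of_mem_periodicPts hmem
  set m := Function.minimalPeriod f d₀
  have : Nat.card (Fin m) = Nat.card {x | ∃ k, f^[k] d₀ = x} := by
    apply Nat.card_eq_of_bijective (fun k => ⟨f^[(k : Fin m).1] d₀, ⟨k.1, rfl⟩⟩)
    constructor
    · intro k l hkl
      have := congrArg Subtype.val hkl
      have h2 := Function.iterate_injOn_Iio_minimalPeriod (f := f) (x := d₀)
        (Set.mem_Iio.mpr k.2) (Set.mem_Iio.mpr l.2) this
      exact Fin.ext h2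
    · rintro ⟨x, k, rfl⟩
      refine ⟨⟨k % m, Nat.mod_lt _ hm⟩, ?_⟩
      apply Subtype.ext
      exact Function.iterate_mod_minimalPeriod_eq
  rw [← this, Nat.card_eq_fintype_card, Fintype.card_fin]

lemma minimalPeriod_eq_three (d₀ : α) (h3 : f^[3] d₀ = d₀) (h1 : f d₀ ≠ d₀) :
    Function.minimalPeriod f d₀ = 3 := by
  have hdvd : Function.minimalPeriod f d₀ ∣ 3 :=
    Function.IsPeriodicPt.minimalPeriod_dvd h3
  rcases (Nat.dvd_prime Nat.prime_three).mp hdvd with h | h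
  · exfalso
    apply h1
    have := Function.iterate_minimalPeriod (f := f) (x := d₀)
    rw [h] at this
    simpa using this
  · exact h

end Count

section Extract

abbrev K8 := completeGraph (Fin 8)

instance : DecidableRel K8.Adj := fun a b => inferInstanceAs (Decidable (a ≠ b))

lemma K8_adj {a b : Fin 8} : K8.Adj a b ↔ a ≠ b := Iff.rfl

lemma next_fst {V : Type} {G : SimpleGraph V} (R : RotSys G) (d : G.Dart) :
    (R.next d).toProd.1 = d.toProd.2 := rfl

lemma next_snd {V : Type} {G : SimpleGraph V} (R : RotSys G) (d : G.Dart) :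
    (R.next d).toProd.2 = R.rot d.toProd.2 d.toProd.1 := rfl

lemma next_injective {V : Type} {G : SimpleGraph V} (R : RotSys G) :
    Function.Injective R.next := by
  intro d d' h
  have h1 : d.toProd.2 = d'.toProd.2 := congrArg (fun x => x.toProd.1) h
  have h2 : R.rot d.toProd.2 d.toProd.1 = R.rot d'.toProd.2 d'.toProd.1 :=
    congrArg (fun x => x.toProd.2) h
  rw [← h1] at h2
  have hadj' : G.Adj d.toProd.2 d'.toProd.1 := by rw [h1]; exact d'.adj.symm
  have h0 := R.inj d.adj.symm hadj' h2
  exact SimpleGraph.Dart.ext _ _ (Prod.ext h0 h1)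

lemma next_ne {V : Type} {G : SimpleGraph V} (R : RotSys G) (d : G.Dart) : R.next d ≠ d := by
  intro h
  have h1 : d.toProd.2 = d.toProd.1 := congrArg (fun x => x.toProd.1) h
  exact d.adj.ne h1.symm

lemma rot_ne_self (R : RotSys K8) {p q : Fin 8} (hpq : p ≠ q) : R.rot p q ≠ q := by
  have hex : ∃ r : Fin 8, r ≠ p ∧ r ≠ q := by
    revert hpq
    revert p q
    decide
  obtain ⟨r, hrp, hrq⟩ := hex
  intro hfix
  obtain ⟨k, hk⟩ := R.cyc (K8_adj.mpr hpq) (K8_adj.mpr (Ne.symm hrp))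
  rw [Function.iterate_fixed hfix k] at hk
  exact hrq hk.symm

end Extract

section Counts

open scoped Classical in
lemma K8_edge_card : Nat.card K8.edgeSet = 28 := by
  have h : Nat.card (⊤ : SimpleGraph (Fin 8)).edgeSet = 28 := by
    rw [Nat.card_eq_fintype_card, ← SimpleGraph.edgeFinset_card,
      SimpleGraph.card_edgeFinset_top_eq_card_choose_two]
    simp
    decide
  exact (congrArg (fun G : SimpleGraph (Fin 8) => Nat.card G.edgeSet)
    (completeGraph_eq_top (Fin 8))).trans h

open scoped Classical in
lemma K8_dart_card : Fintype.card K8.Dart = 56 := by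
  rw [SimpleGraph.dart_card_eq_twice_card_edges, SimpleGraph.edgeFinset_card]
  rw [show Fintype.card K8.edgeSet = Nat.card K8.edgeSet from (Nat.card_eq_fintype_card).symm]
  rw [K8_edge_card]

end Counts

section FiveFace

lemma five_face (R : RotSys K8) (d₀ : K8.Dart)
    (hNT : ∀ d, (R.next)^[3] d = d ∨ ∃ k, (R.next)^[k] d₀ = d)
    (hF : R.numFaces = 18) :
    ∃ w : ZMod 5 → Fin 8, Function.Injective w ∧
      (∀ i, R.rot (w (i+1)) (w i) = w (i+2)) ∧
      (∀ e : K8.Dart, (∃ k, (R.next)^[k] d₀ = e) ↔ ∃ i : ZMod 5, e.toProd = (w i, w (i+1)))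
      ∧ (R.next)^[5] d₀ = d₀ := by
  set f := R.next with hf
  have hfinj : Function.Injective f := next_injective R
  -- orbit of d₀ has 5 elements
  have hmaster := count_master f hfinj d₀ (fun x => by
    rcases hNT x with h | h
    · exact Or.inl ⟨h, next_ne R x⟩
    · exact Or.inr h)
  rw [K8_dart_card] at hmaster
  have hQ : Nat.card (Quot (fun x y => f x = y)) = 18 := hF
  rw [hQ] at hmaster
  have hC : Nat.card {x | ∃ k, f^[k] d₀ = x} = 5 := by omega
  rw [orbit_card_eq_minimalPeriod f hfinj d₀] at hC
  have h5 : f^[5] d₀ = d₀ := by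
    rw [← hC]; exact Function.iterate_minimalPeriod
  -- the vertex sequence
  set a : ℕ → Fin 8 := fun k => (f^[k] d₀).toProd.1 with ha
  have ha2 : ∀ k, (f^[k] d₀).toProd.2 = a (k+1) := by
    intro k
    have : f^[k+1] d₀ = f (f^[k] d₀) := Function.iterate_succ_apply' f k d₀
    show _ = (f^[k+1] d₀).toProd.1
    rw [this]
    rfl
  have hrotn : ∀ k, R.rot (a (k+1)) (a k) = a (k+2) := by
    intro k
    have e1 : f^[k+1] d₀ = f (f^[k] d₀) := Function.iterate_succ_apply' f k d₀
    have e2 := ha2 (k+1)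
    rw [e1] at e2
    have : (f (f^[k] d₀)).toProd.2 = R.rot ((f^[k] d₀).toProd.2) ((f^[k] d₀).toProd.1) := rfl
    rw [this, ha2 k] at e2
    exact e2
  have hper5 : ∀ k, a (k + 5) = a k := by
    intro k
    show (f^[k+5] d₀).toProd.1 = _
    rw [Function.iterate_add_apply, h5]
  have hmod : ∀ k t, a (k + 5*t) = a k := by
    intro k t
    induction t with
    | zero => simp
    | succ n ih => rw [show k + 5*(n+1) = (k + 5*n) + 5 by ring, hper5, ih]
  have hane : ∀ k, a k ≠ a (k+1) := by
    intro k hh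
    apply (f^[k] d₀).adj.ne
    show a k = (f^[k] d₀).toProd.2
    rw [ha2 k]
    exact hh
  have hane2 : ∀ k, a k ≠ a (k+2) := by
    intro k hh
    exact rot_ne_self R (Ne.symm (hane k)) (by rw [hrotn k, ← hh])
  -- w and its properties
  set w : ZMod 5 → Fin 8 := fun i => a i.val with hwdef
  have w_add : ∀ (i : ZMod 5) (c : ℕ), w (i + (c:ZMod 5)) = a (i.val + c) := by
    intro i c
    show a ((i + (c:ZMod 5)).val) = a (i.val + c)
    have hv : (i + (c:ZMod 5)).val = (i.val + c) % 5 := by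
      rw [ZMod.val_add, ZMod.val_natCast]
      conv_rhs => rw [Nat.add_mod, Nat.mod_eq_of_lt (ZMod.val_lt i)]
    rw [hv]
    conv_rhs => rw [← Nat.mod_add_div (i.val + c) 5]
    exact (hmod _ _).symm
  have w0 : ∀ i : ZMod 5, w i = a i.val := fun _ => rfl
  have w_add1 : ∀ i : ZMod 5, w (i + 1) = a (i.val + 1) := by
    intro i
    have := w_add i 1
    rwa [Nat.cast_one] at this
  have w_add2 : ∀ i : ZMod 5, w (i + 2) = a (i.val + 2) := by
    intro i
    have := w_add i 2
    rwa [Nat.cast_ofNat] at this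
  have hz1 : ∀ i : ZMod 5, w i ≠ w (i + 1) := by
    intro i
    rw [w_add1, w0]
    exact hane i.val
  have hz2 : ∀ i : ZMod 5, w i ≠ w (i + 2) := by
    intro i
    rw [w_add2, w0]
    exact hane2 i.val
  have hzrot : ∀ i : ZMod 5, R.rot (w (i+1)) (w i) = w (i+2) := by
    intro i
    rw [w_add1, w_add2, w0]
    exact hrotn i.val
  have hwinj : Function.Injective w := by
    intro i j h
    by_contra hne
    have hk : j = i + (j - i) := by ring
    have hcases : ∀ k : ZMod 5, k = 0 ∨ k = 1 ∨ k = 2 ∨ k = 3 ∨ k = 4 := by decide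
    have h35 : (3 : ZMod 5) + 2 = 0 := by decide
    have h45 : (4 : ZMod 5) + 1 = 0 := by decide
    rcases hcases (j - i) with h0 | h0 | h0 | h0 | h0 <;> rw [h0] at hk
    · exact hne (by rw [hk, add_zero])
    · exact hz1 i (by rw [← hk]; exact h)
    · exact hz2 i (by rw [← hk]; exact h)
    · have e : i + 3 + 2 = i := by rw [add_assoc, h35, add_zero]
      exact hz2 (i + 3) (by rw [e, ← hk]; exact h.symm)
    · have e : i + 4 + 1 = i := by rw [add_assoc, h45, add_zero]
      exact hz1 (i + 4) (by rw [e, ← hk]; exact h.symm)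
  have hD : ∀ i : ZMod 5, (f^[i.val] d₀).toProd = (w i, w (i+1)) := by
    intro i
    have h2 : (f^[i.val] d₀).toProd.2 = w (i+1) := by rw [ha2 i.val, w_add1]
    exact Prod.ext rfl h2
  refine ⟨w, hwinj, hzrot, ?_, h5⟩
  intro e
  constructor
  · rintro ⟨k, rfl⟩
    have hper : Function.IsPeriodicPt f 5 d₀ := h5
    refine ⟨(k : ZMod 5), ?_⟩
    rw [← hper.iterate_mod_apply k]
    have := hD (k : ZMod 5)
    rwa [ZMod.val_natCast] at this
  · rintro ⟨i, hi⟩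
    refine ⟨i.val, ?_⟩
    exact SimpleGraph.Dart.ext _ _ (by rw [hD i, hi])

end FiveFace

section NewGraph

open Fin

def NG (w : ZMod 5 → Fin 8) : SimpleGraph (Fin 9) where
  Adj a b := a ≠ b ∧ (a = Fin.last 8 → ∃ i, b = Fin.castSucc (w i))
    ∧ (b = Fin.last 8 → ∃ i, a = Fin.castSucc (w i))
  symm := by
    constructor
    rintro a b ⟨h1, h2, h3⟩
    exact ⟨h1.symm, h3, h2⟩
  loopless := by
    constructor
    rintro a ⟨h1, -⟩
    exact h1 rfl

instance NG.decAdj (w : ZMod 5 → Fin 8) : DecidableRel (NG w).Adj := fun a b =>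
  decidable_of_iff (a ≠ b ∧ (a = Fin.last 8 → ∃ i, b = Fin.castSucc (w i))
    ∧ (b = Fin.last 8 → ∃ i, a = Fin.castSucc (w i))) Iff.rfl

lemma NG_adj {w : ZMod 5 → Fin 8} {a b : Fin 9} :
    (NG w).Adj a b ↔ a ≠ b ∧ (a = Fin.last 8 → ∃ i, b = Fin.castSucc (w i))
      ∧ (b = Fin.last 8 → ∃ i, a = Fin.castSucc (w i)) := Iff.rfl

lemma cs_ne_last (x : Fin 8) : Fin.castSucc x ≠ Fin.last 8 := (Fin.castSucc_lt_last x).ne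

lemma cs_inj : Function.Injective (Fin.castSucc : Fin 8 → Fin 9) := Fin.castSucc_injective 8

lemma NG_adj_cs {w : ZMod 5 → Fin 8} {a₀ b₀ : Fin 8} :
    (NG w).Adj (Fin.castSucc a₀) (Fin.castSucc b₀) ↔ a₀ ≠ b₀ := by
  rw [NG_adj]
  constructor
  · rintro ⟨h1, -, -⟩
    exact fun h => h1 (by rw [h])
  · intro h
    exact ⟨fun hh => h (cs_inj hh), fun hh => absurd hh (cs_ne_last _),
      fun hh => absurd hh (cs_ne_last _)⟩

lemma NG_adj_u {w : ZMod 5 → Fin 8} {b : Fin 9} :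
    (NG w).Adj (Fin.last 8) b ↔ ∃ i, b = Fin.castSucc (w i) := by
  rw [NG_adj]
  constructor
  · rintro ⟨-, h2, -⟩
    exact h2 rfl
  · rintro ⟨i, rfl⟩
    exact ⟨(cs_ne_last (w i)).symm, fun _ => ⟨i, rfl⟩, fun hh => absurd hh (cs_ne_last _)⟩

lemma NG_adj_u' {w : ZMod 5 → Fin 8} {a : Fin 9} :
    (NG w).Adj a (Fin.last 8) ↔ ∃ i, a = Fin.castSucc (w i) := by
  rw [← NG_adj_u (w := w)]
  exact ⟨fun h => h.symm, fun h => h.symm⟩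

noncomputable def nrot (w : ZMod 5 → Fin 8) (R : RotSys K8) (a x : Fin 9) : Fin 9 :=
  if ha : a = Fin.last 8 then
    if hx : ∃ i, x = Fin.castSucc (w i) then Fin.castSucc (w (hx.choose - 1)) else x
  else
    if hx : x = Fin.last 8 then
      if hfa : ∃ i, a.castPred ha = w i then Fin.castSucc (w (hfa.choose + 1)) else x
    else
      if ∃ i, a.castPred ha = w i ∧ x.castPred hx = w (i - 1) then Fin.last 8
      else Fin.castSucc (R.rot (a.castPred ha) (x.castPred hx))

variable {w : ZMod 5 → Fin 8} {R : RotSys K8}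

lemma nrot_u (hw : Function.Injective w) (i : ZMod 5) :
    nrot w R (Fin.last 8) (Fin.castSucc (w i)) = Fin.castSucc (w (i - 1)) := by
  have hx : ∃ j, (Fin.castSucc (w i) : Fin 9) = Fin.castSucc (w j) := ⟨i, rfl⟩
  have hch : hx.choose = i := (hw (cs_inj hx.choose_spec)).symm
  rw [nrot, dif_pos rfl, dif_pos hx, hch]

lemma nrot_face_u (hw : Function.Injective w) (i : ZMod 5) :
    nrot w R (Fin.castSucc (w i)) (Fin.last 8) = Fin.castSucc (w (i + 1)) := by
  have ha := cs_ne_last (w i)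
  have hfa : ∃ j, (Fin.castSucc (w i)).castPred ha = w j := ⟨i, by simp⟩
  have hch : hfa.choose = i := by
    refine (hw ?_).symm
    have h2 : w hfa.choose = w i := by rw [← hfa.choose_spec]; simp
    exact h2.symm
  rw [nrot, dif_neg ha, dif_pos rfl, dif_pos hfa, hch]

lemma nrot_face_prev (hw : Function.Injective w) (i : ZMod 5) :
    nrot w R (Fin.castSucc (w i)) (Fin.castSucc (w (i - 1))) = Fin.last 8 := by
  have ha := cs_ne_last (w i)
  have hx := cs_ne_last (w (i - 1))
  rw [nrot, dif_neg ha, dif_neg hx, if_pos ⟨i, by simp⟩]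

lemma nrot_face_other (hw : Function.Injective w) (i : ZMod 5) {x₀ : Fin 8}
    (hne : x₀ ≠ w (i - 1)) :
    nrot w R (Fin.castSucc (w i)) (Fin.castSucc x₀) = Fin.castSucc (R.rot (w i) x₀) := by
  have ha := cs_ne_last (w i)
  have hx := cs_ne_last x₀
  rw [nrot, dif_neg ha, dif_neg hx, if_neg, Fin.castPred_castSucc, Fin.castPred_castSucc]
  rintro ⟨j, hj1, hj2⟩
  rw [Fin.castPred_castSucc] at hj1 hj2
  rw [← hw hj1] at hj2
  exact hne hj2

lemma nrot_nonface {a₀ : Fin 8} (hnf : ∀ i, a₀ ≠ w i) (x₀ : Fin 8) :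
    nrot w R (Fin.castSucc a₀) (Fin.castSucc x₀) = Fin.castSucc (R.rot a₀ x₀) := by
  have ha := cs_ne_last a₀
  have hx := cs_ne_last x₀
  rw [nrot, dif_neg ha, dif_neg hx, if_neg, Fin.castPred_castSucc, Fin.castPred_castSucc]
  rintro ⟨j, hj1, -⟩
  rw [Fin.castPred_castSucc] at hj1
  exact hnf j hj1

end NewGraph

section NRS

variable {w : ZMod 5 → Fin 8} {R : RotSys K8}

lemma zmod5_ne_succ (i : ZMod 5) : i ≠ i + 1 := by revert i; decide

lemma nrot_adj (hw : Function.Injective w)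
    (hzrot : ∀ i, R.rot (w (i+1)) (w i) = w (i+2)) :
    ∀ {v x : Fin 9}, (NG w).Adj v x → (NG w).Adj v (nrot w R v x) := by
  intro v x h
  rcases Fin.eq_castSucc_or_eq_last v with ⟨a₀, rfl⟩ | rfl
  · rcases Fin.eq_castSucc_or_eq_last x with ⟨x₀, rfl⟩ | rfl
    · have hax : a₀ ≠ x₀ := NG_adj_cs.mp h
      by_cases hfa : ∃ i, a₀ = w i
      · obtain ⟨i, rfl⟩ := hfa
        by_cases hprev : x₀ = w (i - 1)
        · subst hprev
          rw [nrot_face_prev hw]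
          exact NG_adj_u'.mpr ⟨i, rfl⟩
        · rw [nrot_face_other hw i hprev]
          exact NG_adj_cs.mpr (R.adj_rot (G := K8) (K8_adj.mpr hax)).ne
      · push_neg at hfa
        rw [nrot_nonface hfa]
        exact NG_adj_cs.mpr (R.adj_rot (G := K8) (K8_adj.mpr hax)).ne
    · obtain ⟨i, hi⟩ := NG_adj_u'.mp h
      have : a₀ = w i := cs_inj hi
      subst this
      rw [nrot_face_u hw]
      exact NG_adj_cs.mpr (fun hh => zmod5_ne_succ i (hw hh))
  · obtain ⟨i, rfl⟩ := NG_adj_u.mp h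
    rw [nrot_u hw]
    exact NG_adj_u.mpr ⟨i - 1, rfl⟩

lemma nrot_inj (hw : Function.Injective w)
    (hzrot : ∀ i, R.rot (w (i+1)) (w i) = w (i+2)) :
    ∀ {v x x' : Fin 9}, (NG w).Adj v x → (NG w).Adj v x' →
      nrot w R v x = nrot w R v x' → x = x' := by
  have key : ∀ {i : ZMod 5} {x₀ : Fin 8}, x₀ ≠ w (i - 1) → w i ≠ x₀ →
      Fin.castSucc (w (i + 1)) ≠ Fin.castSucc (R.rot (w i) x₀) := by
    intro i x₀ hprev hne heq
    apply hprev
    have h1 : R.rot (w i) (w (i-1)) = w (i+1) := by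
      have := hzrot (i - 1)
      rw [show i - 1 + 1 = i by ring, show i - 1 + 2 = i + 1 by ring] at this
      exact this
    have := R.inj (v := w i) (w := w (i-1)) (w' := x₀)
      (K8_adj.mpr (fun hh => zmod5_ne_succ (i-1) (by
        rw [show i - 1 + 1 = i by ring]; exact hw hh.symm)))
      (K8_adj.mpr hne) (by rw [h1, ← (cs_inj heq)])
    exact this.symm
  intro v x x' hx hx' heq
  rcases Fin.eq_castSucc_or_eq_last v with ⟨a₀, rfl⟩ | rfl
  · rcases Fin.eq_castSucc_or_eq_last x with ⟨x₀, rfl⟩ | rfl <;>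
      rcases Fin.eq_castSucc_or_eq_last x' with ⟨x₀', rfl⟩ | rfl
    · -- both castSucc
      have hax : a₀ ≠ x₀ := NG_adj_cs.mp hx
      have hax' : a₀ ≠ x₀' := NG_adj_cs.mp hx'
      by_cases hfa : ∃ i, a₀ = w i
      · obtain ⟨i, rfl⟩ := hfa
        by_cases hp : x₀ = w (i - 1) <;> by_cases hp' : x₀' = w (i - 1)
        · rw [hp, hp']
        · subst hp
          rw [nrot_face_prev hw, nrot_face_other hw i hp'] at heq
          exact absurd heq.symm (cs_ne_last _)
        · subst hp'
          rw [nrot_face_prev hw, nrot_face_other hw i hp] at heq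
          exact absurd heq (cs_ne_last _)
        · rw [nrot_face_other hw i hp, nrot_face_other hw i hp'] at heq
          congr 1
          exact R.inj (K8_adj.mpr hax) (K8_adj.mpr hax') (cs_inj heq)
      · push_neg at hfa
        rw [nrot_nonface hfa, nrot_nonface hfa] at heq
        congr 1
        exact R.inj (K8_adj.mpr hax) (K8_adj.mpr hax') (cs_inj heq)
    · -- x castSucc, x' = last
      obtain ⟨i, hi⟩ := NG_adj_u'.mp hx'
      have hia : a₀ = w i := cs_inj hi
      subst hia
      have hax : w i ≠ x₀ := NG_adj_cs.mp hx
      by_cases hp : x₀ = w (i - 1)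
      · subst hp
        rw [nrot_face_prev hw, nrot_face_u hw] at heq
        exact absurd heq.symm (cs_ne_last _)
      · rw [nrot_face_other hw i hp, nrot_face_u hw] at heq
        exact absurd heq.symm (key hp hax)
    · -- x = last, x' castSucc
      obtain ⟨i, hi⟩ := NG_adj_u'.mp hx
      have hia : a₀ = w i := cs_inj hi
      subst hia
      have hax' : w i ≠ x₀' := NG_adj_cs.mp hx'
      by_cases hp : x₀' = w (i - 1)
      · subst hp
        rw [nrot_face_prev hw, nrot_face_u hw] at heq
        exact absurd heq (cs_ne_last _)
      · rw [nrot_face_other hw i hp, nrot_face_u hw] at heq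
        exact absurd heq (key hp hax')
    · rfl
  · obtain ⟨i, rfl⟩ := NG_adj_u.mp hx
    obtain ⟨j, rfl⟩ := NG_adj_u.mp hx'
    rw [nrot_u hw, nrot_u hw] at heq
    have : i - 1 = j - 1 := hw (cs_inj heq)
    rw [sub_left_inj] at this
    rw [this]

end NRS

section Cyc

lemma iter_subtype {β : Type} (g : β → β) (P : β → Prop) (hmap : ∀ x, P x → P (g x))
    (gg : {b // P b} → {b // P b}) (hgg : ∀ z, (gg z).val = g z.val) :
    ∀ (k : ℕ) (z : {b // P b}), (gg^[k] z).val = g^[k] z.val := by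
  intro k
  induction k with
  | zero => intro z; rfl
  | succ n ih =>
      intro z
      rw [Function.iterate_succ_apply', Function.iterate_succ_apply', hgg, ih]

lemma cyc_of_reach {β : Type} [Fintype β] [DecidableEq β] (g : β → β) (P : β → Prop)
    (hmap : ∀ x, P x → P (g x)) (hinj : ∀ x y, P x → P y → g x = g y → x = y)
    (x₀ : β) (h₀ : P x₀) (hreach : ∀ y, P y → ∃ k, g^[k] x₀ = y) :
    ∀ x y, P x → P y → ∃ k, g^[k] x = y := by
  classical
  set gg : {b // P b} → {b // P b} := fun z => ⟨g z.val, hmap z.val z.2⟩ with hggdef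
  have hggval : ∀ z, (gg z).val = g z.val := fun z => rfl
  have hgginj : Function.Injective gg := by
    intro z z' h
    exact Subtype.ext (hinj _ _ z.2 z'.2 (congrArg Subtype.val h))
  obtain ⟨m, hm, hper⟩ := exists_period gg hgginj ⟨x₀, h₀⟩
  have hperv : g^[m] x₀ = x₀ := by
    have := congrArg Subtype.val hper
    rwa [iter_subtype g P hmap gg hggval] at this
  intro x y hx hy
  obtain ⟨j, hj⟩ := hreach x hx
  obtain ⟨k, hk⟩ := hreach y hy
  have hMfix : g^[m * (j+1)] x₀ = x₀ := iterate_mul_fix g hperv (j+1)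
  have hjm : j ≤ m * (j+1) := by nlinarith
  refine ⟨k + (m * (j+1) - j), ?_⟩
  have h1 : g^[m * (j+1) - j] x = x₀ := by
    rw [← hj, ← Function.iterate_add_apply, show m*(j+1) - j + j = m*(j+1) by omega]
    exact hMfix
  rw [Function.iterate_add_apply, h1, hk]

variable {w : ZMod 5 → Fin 8} {R : RotSys K8}

lemma nrot_cyc (hw : Function.Injective w)
    (hzrot : ∀ i, R.rot (w (i+1)) (w i) = w (i+2)) :
    ∀ {v x y : Fin 9}, (NG w).Adj v x → (NG w).Adj v y →
      ∃ k : ℕ, (nrot w R v)^[k] x = y := by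
  have base : ∀ (v : Fin 9), ∃ x₀, (NG w).Adj v x₀ →
      True := fun v => ⟨v, fun _ => trivial⟩
  intro v x y hx hy
  rcases Fin.eq_castSucc_or_eq_last v with ⟨a₀, rfl⟩ | rfl
  · by_cases hfa : ∃ i, a₀ = w i
    · obtain ⟨i, rfl⟩ := hfa
      refine cyc_of_reach (nrot w R (Fin.castSucc (w i))) ((NG w).Adj (Fin.castSucc (w i)))
        (fun z hz => nrot_adj hw hzrot hz) (fun z z' hz hz' => nrot_inj hw hzrot hz hz')
        (Fin.last 8) (NG_adj_u'.mpr ⟨i, rfl⟩) ?_ x y hx hy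
      intro z hz
      rcases Fin.eq_castSucc_or_eq_last z with ⟨y₀, rfl⟩ | rfl
      swap
      · exact ⟨0, rfl⟩
      have hyne : w i ≠ y₀ := NG_adj_cs.mp hz
      set g := nrot w R (Fin.castSucc (w i)) with hgdef
      set o := R.rot (w i) with hodef
      have hAdj1 : K8.Adj (w i) (w (i+1)) :=
        K8_adj.mpr (fun hh => zmod5_ne_succ i (hw hh))
      have hex : ∃ k, o^[k] (w (i+1)) = y₀ := R.cyc hAdj1 (K8_adj.mpr hyne)
      set m := Nat.find hex with hmdef
      have hm : o^[m] (w (i+1)) = y₀ := Nat.find_spec hex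
      have claimA : ∀ k, k < m → o^[k] (w (i+1)) ≠ w (i-1) := by
        intro k hk hbad
        have hper : Function.IsPeriodicPt o (k+1) (w (i+1)) := by
          show o^[k+1] (w (i+1)) = w (i+1)
          rw [Function.iterate_succ_apply', hbad]
          have := hzrot (i-1)
          rw [show i - 1 + 1 = i by ring, show i - 1 + 2 = i + 1 by ring] at this
          exact this
        have hmod : o^[m % (k+1)] (w (i+1)) = y₀ := by
          rw [hper.iterate_mod_apply]
          exact hm
        have hlt : m % (k+1) < m := by
          have := Nat.mod_lt m (show 0 < k + 1 by omega)
          omega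
        exact Nat.find_min hex hlt hmod
      have claimB : ∀ k, k ≤ m → g^[k+1] (Fin.last 8) = Fin.castSucc (o^[k] (w (i+1))) := by
        intro k
        induction k with
        | zero =>
            intro _
            show g (Fin.last 8) = _
            rw [hgdef]
            exact nrot_face_u hw i
        | succ n ih =>
            intro hn
            rw [Function.iterate_succ_apply' g (n+1), ih (by omega),
              Function.iterate_succ_apply' o]
            rw [hgdef]
            exact nrot_face_other hw i (claimA n (by omega))
      exact ⟨m + 1, by rw [claimB m le_rfl, hm]⟩
    · push_neg at hfa
      have hcs : ∀ z, (NG w).Adj (Fin.castSucc a₀) z → ∃ z₀, z = Fin.castSucc z₀ ∧ a₀ ≠ z₀ := by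
        intro z hz
        rcases Fin.eq_castSucc_or_eq_last z with ⟨z₀, rfl⟩ | rfl
        · exact ⟨z₀, rfl, NG_adj_cs.mp hz⟩
        · obtain ⟨i, hi⟩ := NG_adj_u'.mp hz
          exact absurd (cs_inj hi) (hfa i)
      obtain ⟨x₀, rfl, hax⟩ := hcs x hx
      obtain ⟨y₀, rfl, hay⟩ := hcs y hy
      obtain ⟨k, hk⟩ := R.cyc (K8_adj.mpr hax) (K8_adj.mpr hay)
      refine ⟨k, ?_⟩
      have hit : ∀ (n : ℕ) (z₀ : Fin 8),
          (nrot w R (Fin.castSucc a₀))^[n] (Fin.castSucc z₀)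
            = Fin.castSucc ((R.rot a₀)^[n] z₀) := by
        intro n
        induction n with
        | zero => intro z₀; rfl
        | succ n ih =>
            intro z₀
            rw [Function.iterate_succ_apply', Function.iterate_succ_apply', ih,
              nrot_nonface hfa]
      rw [hit, hk]
  · obtain ⟨i, rfl⟩ := NG_adj_u.mp hx
    obtain ⟨j, rfl⟩ := NG_adj_u.mp hy
    have hit : ∀ (n : ℕ) (i : ZMod 5),
        (nrot w R (Fin.last 8))^[n] (Fin.castSucc (w i)) = Fin.castSucc (w (i - n)) := by
      intro n
      induction n with
      | zero => intro i; simp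
      | succ n ih =>
          intro i
          rw [Function.iterate_succ_apply, nrot_u hw, ih]
          congr 2
          push_cast
          ring
    refine ⟨((i - j) : ZMod 5).val, ?_⟩
    rw [hit]
    congr 2
    rw [ZMod.natCast_val, ZMod.cast_id]
    ring
  
noncomputable def NRS (w : ZMod 5 → Fin 8) (R : RotSys K8) (hw : Function.Injective w)
    (hzrot : ∀ i, R.rot (w (i+1)) (w i) = w (i+2)) : RotSys (NG w) where
  rot := nrot w R
  adj_rot := nrot_adj hw hzrot
  inj := nrot_inj hw hzrot
  cyc := nrot_cyc hw hzrot

end Cyc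

section Faces

variable {w : ZMod 5 → Fin 8} {R : RotSys K8}

def dA (hw : Function.Injective w) (i : ZMod 5) : (NG w).Dart :=
  ⟨(Fin.castSucc (w i), Fin.last 8), NG_adj_u'.mpr ⟨i, rfl⟩⟩

def dB (hw : Function.Injective w) (i : ZMod 5) : (NG w).Dart :=
  ⟨(Fin.last 8, Fin.castSucc (w i)), NG_adj_u.mpr ⟨i, rfl⟩⟩

def dC (hw : Function.Injective w) (i : ZMod 5) : (NG w).Dart :=
  ⟨(Fin.castSucc (w i), Fin.castSucc (w (i+1))),
    NG_adj_cs.mpr (fun hh => zmod5_ne_succ i (hw hh))⟩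

def dE (w : ZMod 5 → Fin 8) (e : K8.Dart) : (NG w).Dart :=
  ⟨(Fin.castSucc e.toProd.1, Fin.castSucc e.toProd.2), NG_adj_cs.mpr (K8_adj.mp e.adj)⟩

variable (hw : Function.Injective w) (hzrot : ∀ i, R.rot (w (i+1)) (w i) = w (i+2))

lemma sA (i : ZMod 5) : (NRS w R hw hzrot).next (dA hw i) = dB hw (i - 1) :=
  SimpleGraph.Dart.ext _ _ (Prod.ext rfl (nrot_u (R := R) hw i))

lemma sB (i : ZMod 5) : (NRS w R hw hzrot).next (dB hw i) = dC hw i :=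
  SimpleGraph.Dart.ext _ _ (Prod.ext rfl (nrot_face_u (R := R) hw i))

lemma sC (i : ZMod 5) : (NRS w R hw hzrot).next (dC hw i) = dA hw (i + 1) := by
  refine SimpleGraph.Dart.ext _ _ (Prod.ext rfl ?_)
  have := nrot_face_prev (R := R) hw (i + 1)
  rw [show i + 1 - 1 = i by ring] at this
  exact this

lemma sE (e : K8.Dart) (hnf : ∀ i : ZMod 5, e.toProd ≠ (w i, w (i+1))) :
    (NRS w R hw hzrot).next (dE w e) = dE w (R.next e) := by
  refine SimpleGraph.Dart.ext _ _ (Prod.ext rfl ?_)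
  show nrot w R (Fin.castSucc e.toProd.2) (Fin.castSucc e.toProd.1)
      = Fin.castSucc (R.rot e.toProd.2 e.toProd.1)
  by_cases hb : ∃ j, e.toProd.2 = w j
  · obtain ⟨j, hj⟩ := hb
    have hne : e.toProd.1 ≠ w (j - 1) := by
      intro h1
      apply hnf (j - 1)
      rw [show j - 1 + 1 = j by ring]
      exact Prod.ext h1 hj
    rw [hj]
    rw [nrot_face_other hw j hne, ← hj]
  · push_neg at hb
    rw [nrot_nonface hb]

lemma NRS_tri
    (hNT3 : ∀ e : K8.Dart, (∀ i : ZMod 5, e.toProd ≠ (w i, w (i+1))) → (R.next)^[3] e = e)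
    (hclosed : ∀ e : K8.Dart, (∀ i : ZMod 5, e.toProd ≠ (w i, w (i+1))) →
      ∀ i : ZMod 5, (R.next e).toProd ≠ (w i, w (i+1))) :
    ∀ d : (NG w).Dart, ((NRS w R hw hzrot).next)^[3] d = d := by
  intro d
  show (NRS w R hw hzrot).next ((NRS w R hw hzrot).next ((NRS w R hw hzrot).next d)) = d
  rcases Fin.eq_castSucc_or_eq_last d.toProd.1 with ⟨a₀, ha⟩ | ha <;>
    rcases Fin.eq_castSucc_or_eq_last d.toProd.2 with ⟨b₀, hb⟩ | hb
  · -- both castSucc : d = dE e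
    have hadj : K8.Adj a₀ b₀ := by
      have hd := d.adj
      rw [NG_adj] at hd
      exact K8_adj.mpr (fun hh => hd.1 (by rw [ha, hb, hh]))
    set e : K8.Dart := ⟨(a₀, b₀), hadj⟩ with he
    have hd : d = dE w e := SimpleGraph.Dart.ext _ _ (Prod.ext ha hb)
    rw [hd]
    by_cases hface : ∃ i : ZMod 5, e.toProd = (w i, w (i+1))
    · obtain ⟨i, hi⟩ := hface
      have hdC : dE w e = dC hw i := SimpleGraph.Dart.ext _ _
        (Prod.ext (congrArg (fun p : Fin 8 × Fin 8 => Fin.castSucc p.1) hi)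
          (congrArg (fun p : Fin 8 × Fin 8 => Fin.castSucc p.2) hi))
      rw [hdC, sC hw hzrot, sA hw hzrot, show i + 1 - 1 = i by ring, sB hw hzrot]
    · push_neg at hface
      rw [sE hw hzrot e hface,
        sE hw hzrot _ (hclosed e hface),
        sE hw hzrot _ (hclosed _ (hclosed e hface))]
      have h3 : (R.next) ((R.next) ((R.next) e)) = e := hNT3 e hface
      rw [h3]
  · -- d = dA i
    obtain ⟨i, hi⟩ := NG_adj_u'.mp (hb ▸ d.adj)
    have hd : d = dA hw i := SimpleGraph.Dart.ext _ _ (Prod.ext hi hb)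
    rw [hd, sA hw hzrot, sB hw hzrot, sC hw hzrot, show i - 1 + 1 = i by ring]
  · -- d = dB i
    obtain ⟨i, hi⟩ := NG_adj_u.mp (ha ▸ d.adj)
    have hd : d = dB hw i := SimpleGraph.Dart.ext _ _ (Prod.ext ha hi)
    rw [hd, sB hw hzrot, sC hw hzrot, sA hw hzrot, show i + 1 - 1 = i by ring]
  · exfalso
    exact (NG_adj.mp d.adj).1 (by rw [ha, hb])

end Faces

section NGCounts

variable {w : ZMod 5 → Fin 8} {R : RotSys K8}

lemma NG_deg_last (hw : Function.Injective w) : (NG w).degree (Fin.last 8) = 5 := by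
  rw [← SimpleGraph.card_neighborFinset_eq_degree]
  have : (NG w).neighborFinset (Fin.last 8)
      = Finset.univ.image (fun i => Fin.castSucc (w i)) := by
    ext b
    simp only [SimpleGraph.mem_neighborFinset, Finset.mem_image, Finset.mem_univ, true_and]
    rw [NG_adj_u]
    constructor
    · rintro ⟨i, rfl⟩; exact ⟨i, rfl⟩
    · rintro ⟨i, rfl⟩; exact ⟨i, rfl⟩
  rw [this, Finset.card_image_of_injective _ (fun i j h => hw (cs_inj h))]
  simp

lemma NG_deg_face (hw : Function.Injective w) (i : ZMod 5) :
    (NG w).degree (Fin.castSucc (w i)) = 8 := by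
  rw [← SimpleGraph.card_neighborFinset_eq_degree]
  have : (NG w).neighborFinset (Fin.castSucc (w i))
      = Finset.univ.erase (Fin.castSucc (w i)) := by
    ext b
    simp only [SimpleGraph.mem_neighborFinset, Finset.mem_erase, Finset.mem_univ, and_true]
    constructor
    · exact fun h => h.ne'
    · intro hb
      rcases Fin.eq_castSucc_or_eq_last b with ⟨b₀, rfl⟩ | rfl
      · exact NG_adj_cs.mpr (fun hh => hb (by rw [hh]))
      · exact (NG_adj_u' (w := w)).mpr ⟨i, rfl⟩
  rw [this, Finset.card_erase_of_mem (Finset.mem_univ _)]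
  simp

lemma NG_deg_nonface {a₀ : Fin 8} (hnf : ∀ i, a₀ ≠ w i) :
    (NG w).degree (Fin.castSucc a₀) = 7 := by
  rw [← SimpleGraph.card_neighborFinset_eq_degree]
  have : (NG w).neighborFinset (Fin.castSucc a₀)
      = (Finset.univ.erase (Fin.castSucc a₀)).erase (Fin.last 8) := by
    ext b
    simp only [SimpleGraph.mem_neighborFinset, Finset.mem_erase, Finset.mem_univ, and_true]
    constructor
    · intro h
      refine ⟨?_, h.ne'⟩
      rintro rfl
      obtain ⟨i, hi⟩ := NG_adj_u'.mp h
      exact hnf i (cs_inj hi)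
    · rintro ⟨hbl, hba⟩
      rcases Fin.eq_castSucc_or_eq_last b with ⟨b₀, rfl⟩ | rfl
      · exact NG_adj_cs.mpr (fun hh => hba (by rw [hh]))
      · exact absurd rfl hbl
  rw [this, Finset.card_erase_of_mem, Finset.card_erase_of_mem (Finset.mem_univ _)]
  · simp
  · exact Finset.mem_erase.mpr ⟨(cs_ne_last a₀).symm, Finset.mem_univ _⟩

open scoped Classical in
lemma NG_edge_card (hw : Function.Injective w) : Nat.card (NG w).edgeSet = 33 := by
  have hsum : ∑ v : Fin 9, (NG w).degree v = 66 := by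
    rw [Fin.sum_univ_castSucc]
    have h1 : ∑ a₀ : Fin 8, (NG w).degree (Fin.castSucc a₀)
        = ∑ a₀ : Fin 8, (if ∃ i, a₀ = w i then 8 else 7) := by
      refine Finset.sum_congr rfl ?_
      intro a₀ _
      split_ifs with h
      · obtain ⟨i, rfl⟩ := h
        exact NG_deg_face hw i
      · push_neg at h
        exact NG_deg_nonface h
    rw [h1, NG_deg_last hw]
    have h2 : (Finset.univ.filter (fun a₀ : Fin 8 => ∃ i, a₀ = w i)).card = 5 := by
      have : Finset.univ.filter (fun a₀ : Fin 8 => ∃ i, a₀ = w i)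
          = Finset.univ.image w := by
        ext a
        simp only [Finset.mem_filter, Finset.mem_univ, true_and, Finset.mem_image]
        constructor
        · rintro ⟨i, rfl⟩; exact ⟨i, rfl⟩
        · rintro ⟨i, _, rfl⟩; exact ⟨i, rfl⟩
      rw [this, Finset.card_image_of_injective _ hw]
      simp
    have h3 := Finset.card_filter_add_card_filter_not
      (s := (Finset.univ : Finset (Fin 8))) (p := fun a₀ => ∃ i, a₀ = w i)
    rw [Finset.sum_ite, Finset.sum_const, Finset.sum_const, h2]
    simp only [Finset.card_univ, Fintype.card_fin] at h3
    simp only [smul_eq_mul]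
    omega
  have htwice := SimpleGraph.sum_degrees_eq_twice_card_edges (NG w)
  rw [hsum] at htwice
  rw [Nat.card_eq_fintype_card, ← SimpleGraph.edgeFinset_card]
  omega

open scoped Classical in
lemma NG_dart_card (hw : Function.Injective w) : Fintype.card (NG w).Dart = 66 := by
  rw [SimpleGraph.dart_card_eq_twice_card_edges, SimpleGraph.edgeFinset_card,
    show Fintype.card (NG w).edgeSet = Nat.card (NG w).edgeSet from
      (Nat.card_eq_fintype_card).symm, NG_edge_card hw]

open scoped Classical in
lemma NRS_numFaces (hw : Function.Injective w)
    (hzrot : ∀ i, R.rot (w (i+1)) (w i) = w (i+2))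
    (htri : ∀ d : (NG w).Dart, ((NRS w R hw hzrot).next)^[3] d = d) :
    (NRS w R hw hzrot).numFaces = 22 := by
  set f := (NRS w R hw hzrot).next with hfdef
  have hfinj : Function.Injective f := next_injective _
  set d₀ : (NG w).Dart := dB hw 0 with hd₀
  have hmaster := count_master f hfinj d₀ (fun x => Or.inl ⟨htri x, next_ne _ x⟩)
  rw [NG_dart_card hw] at hmaster
  have horb : Nat.card {x | ∃ k, f^[k] d₀ = x} = 3 := by
    rw [orbit_card_eq_minimalPeriod f hfinj d₀,
      minimalPeriod_eq_three f hfinj d₀ (htri d₀) (next_ne _ d₀)]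
  rw [horb] at hmaster
  show Nat.card (Quot (fun d d' => f d = d')) = 22
  omega

end NGCounts

/-- Assuming Huneke's theorem, that no simple graph with fewer than 10 vertices has a
triangular embedding in the orientable surface `S_2` of genus 2, the complete graph
`K_8` has no nearly triangular embedding in `S_2`, i.e. no nearly triangular minimum
genus embedding (the minimum genus of `K_8` being 2). -/
theorem stmt9
    (huneke : ∀ (n : ℕ), n ≤ 9 → ∀ (G : SimpleGraph (Fin n)) (R : RotSys G),
      (∀ d : G.Dart, (R.next)^[3] d = d ∧ R.next d ≠ d) →
      ¬ ((n : ℤ) - (Nat.card G.edgeSet : ℤ) + (R.numFaces : ℤ) = 2 - 2 * 2)) :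
    ∀ R : RotSys (completeGraph (Fin 8)),
      ((8 : ℤ) - (Nat.card (completeGraph (Fin 8)).edgeSet : ℤ) + (R.numFaces : ℤ)
        = 2 - 2 * 2) →
      ¬ R.nearlyTriangular := by
  intro R hEuler hNT'
  obtain ⟨d₀, hNT⟩ := hNT'
  have hE28 : Nat.card (completeGraph (Fin 8)).edgeSet = 28 := K8_edge_card
  rw [hE28] at hEuler
  have hF : R.numFaces = 18 := by omega
  obtain ⟨w, hw, hzrot, hchar, h5⟩ := five_face R d₀ hNT hF
  have hNT3 : ∀ e : K8.Dart, (∀ i : ZMod 5, e.toProd ≠ (w i, w (i+1))) →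
      (R.next)^[3] e = e := by
    intro e he
    rcases hNT e with h | h
    · exact h
    · obtain ⟨i, hi⟩ := (hchar e).mp h
      exact absurd hi (he i)
  have hclosed : ∀ e : K8.Dart, (∀ i : ZMod 5, e.toProd ≠ (w i, w (i+1))) →
      ∀ i : ZMod 5, (R.next e).toProd ≠ (w i, w (i+1)) := by
    intro e he i hi
    obtain ⟨k, hk⟩ := (hchar (R.next e)).mpr ⟨i, hi⟩
    have he' : ∃ k, (R.next)^[k] d₀ = e := by
      rcases k with _ | k'
      · refine ⟨4, next_injective R ?_⟩
        rw [← Function.iterate_succ_apply' R.next 4 d₀, h5]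
        exact hk
      · refine ⟨k', next_injective R ?_⟩
        rw [← Function.iterate_succ_apply' R.next k' d₀]
        exact hk
    obtain ⟨j, hj⟩ := (hchar e).mp he'
    exact he j hj
  have htri := NRS_tri hw hzrot hNT3 hclosed
  have h22 := NRS_numFaces hw hzrot htri
  have h33 := NG_edge_card (w := w) hw
  refine huneke 9 le_rfl (NG w) (NRS w R hw hzrot)
    (fun d => ⟨htri d, next_ne _ d⟩) ?_
  rw [h33, h22]
  norm_num
end
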